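/- Let f(λ) = Σ_{i=1}^N c_i λ^{m_i} e^{−λ/b_i} with c_i ≥ 0 not all zero, m_i nonnegative integers, and b_i > 0 for all i. Then the Lin condition holds: the function λ ↦ −λ f′(λ)/f(λ) tends to +∞ as λ → +∞. -/

import Mathlib

lemma pow_pred_mul_aux (x : ℝ) (m : ℕ) : (m : ℝ) * x ^ (m - 1) * x = (m : ℝ) * x ^ m := by
  cases m with
  | zero => simp
  | succ k => push_cast; simp only [Nat.add_sub_cancel, pow_succ]; ring

/-- Lin condition: for `f(λ) = Σ_i c_i λ^{m_i} e^{-λ/b_i}` with `c_i ≥ 0` not all zero,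
`m_i ∈ ℕ` and `b_i > 0`, the function `λ ↦ -λ f'(λ)/f(λ)` tends to `+∞` as `λ → +∞`. -/
theorem stmt_2 (N : ℕ) (hN : 1 ≤ N) (c : Fin N → ℝ) (m : Fin N → ℕ) (b : Fin N → ℝ)
    (hc : ∀ i, 0 ≤ c i) (hc0 : ∃ i, c i ≠ 0)
    (hb : ∀ i, 0 < b i)
    (f : ℝ → ℝ)
    (hf : f = fun lam => ∑ i, c i * lam ^ (m i) * Real.exp (-lam / b i)) :
    Filter.Tendsto (fun lam => -lam * deriv f lam / f lam) Filter.atTop Filter.atTop := by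
  haveI hNe : Nonempty (Fin N) := ⟨⟨0, hN⟩⟩
  set B : ℝ := Finset.univ.sup' Finset.univ_nonempty b with hBdef
  have hbB : ∀ i, b i ≤ B := fun i => Finset.le_sup' b (Finset.mem_univ i)
  have hBpos : 0 < B := lt_of_lt_of_le (hb (Classical.arbitrary _)) (hbB _)
  set M : ℕ := Finset.univ.sup m with hMdef
  have hmM : ∀ i, m i ≤ M := fun i => Finset.le_sup (Finset.mem_univ i)
  -- derivative of f
  have hder : ∀ x : ℝ, HasDerivAt f
      (∑ i, (c i * ((m i : ℝ) * x ^ (m i - 1)) * Real.exp (-x / b i)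
        + c i * x ^ (m i) * (Real.exp (-x / b i) * (-1 / b i)))) x := by
    intro x
    rw [hf]
    refine HasDerivAt.fun_sum fun i _ => ?_
    have h1 : HasDerivAt (fun lam : ℝ => c i * lam ^ (m i))
        (c i * ((m i : ℝ) * x ^ (m i - 1))) x := (hasDerivAt_pow (m i) x).const_mul (c i)
    have h2 : HasDerivAt (fun lam : ℝ => Real.exp (-lam / b i))
        (Real.exp (-x / b i) * (-1 / b i)) x := by
      have h3 : HasDerivAt (fun lam : ℝ => -lam / b i) (-1 / b i) x := by
        simpa using ((hasDerivAt_id x).neg.div_const (b i))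
      exact h3.exp
    exact h1.mul h2
  -- positivity of f on (0,∞)
  have hfpos : ∀ x : ℝ, 0 < x → 0 < f x := by
    intro x hx
    rw [hf]
    obtain ⟨j, hj⟩ := hc0
    refine Finset.sum_pos' (fun i _ => ?_) ⟨j, Finset.mem_univ j, ?_⟩
    · exact mul_nonneg (mul_nonneg (hc i) (pow_nonneg hx.le _)) (Real.exp_pos _).le
    · have hcj : 0 < c j := lt_of_le_of_ne (hc j) (Ne.symm hj)
      positivity
  -- key pointwise bound
  have hkey : ∀ x : ℝ, 0 < x → x / B - (M : ℝ) ≤ -x * deriv f x / f x := by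
    intro x hx
    rw [(hder x).deriv]
    rw [le_div_iff₀ (hfpos x hx)]
    rw [hf]
    simp only
    rw [Finset.mul_sum, Finset.mul_sum]
    refine Finset.sum_le_sum fun i _ => ?_
    have hbi := hb i
    have he : 0 < Real.exp (-x / b i) := Real.exp_pos _
    have hid : -x * (c i * ((m i : ℝ) * x ^ (m i - 1)) * Real.exp (-x / b i)
        + c i * x ^ (m i) * (Real.exp (-x / b i) * (-1 / b i)))
        = (x / b i - (m i : ℝ)) * (c i * x ^ (m i) * Real.exp (-x / b i)) := by
      have h1 := pow_pred_mul_aux x (m i)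
      field_simp
      linear_combination (-(c i * b i)) * h1
    rw [hid]
    have hfac : x / B - (M : ℝ) ≤ x / b i - (m i : ℝ) := by
      have h1 : x / B ≤ x / b i := by
        apply div_le_div_of_nonneg_left hx.le hbi (hbB i)
      have h2 : (m i : ℝ) ≤ (M : ℝ) := by exact_mod_cast hmM i
      linarith
    have hnn : 0 ≤ c i * x ^ (m i) * Real.exp (-x / b i) :=
      mul_nonneg (mul_nonneg (hc i) (pow_nonneg hx.le _)) (Real.exp_pos _).le
    exact mul_le_mul_of_nonneg_right hfac hnn
  -- conclude
  have hlow : Filter.Tendsto (fun x : ℝ => x / B - (M : ℝ)) Filter.atTop Filter.atTop := by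
    have h1 : Filter.Tendsto (fun x : ℝ => x / B) Filter.atTop Filter.atTop :=
      Filter.tendsto_id.atTop_div_const hBpos
    simpa [sub_eq_add_neg] using h1.atTop_add tendsto_const_nhds
  refine Filter.tendsto_atTop_mono' _ ?_ hlow
  filter_upwards [Filter.eventually_gt_atTop 0] with x hx
  exact hkey x hx
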